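/- Let R be a connected N-graded algebra over a field K (i.e., R_0 = K) that is NI. Then R is NJ: J(R) = N(R). -/

import Mathlib

/-- The set of nilpotent elements of `R`. -/
def nilSet (R : Type*) [Ring R] : Set R := {x | IsNilpotent x}

/-- A two-sided ideal is nil if all its elements are nilpotent. -/
def TwoSidedIdeal.IsNil {R : Type*} [Ring R] (I : TwoSidedIdeal R) : Prop :=
  ∀ x ∈ I, IsNilpotent x

/-- The upper nilradical of `R`: the sum of all nil two-sided ideals. -/
def upperNilradical (R : Type*) [Ring R] : TwoSidedIdeal R :=
  sSup {I : TwoSidedIdeal R | I.IsNil}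

/-- `R` is an NI ring if its set of nilpotent elements equals its upper nilradical. -/
def IsNIRing (R : Type*) [Ring R] : Prop :=
  (upperNilradical R : Set R) = nilSet R

/-- The Jacobson radical of the ring `R` (intersection of all maximal left ideals). -/
def jacobsonRad (R : Type*) [Ring R] : Ideal R := (⊥ : Ideal R).jacobson

/-- `ab` nilpotent implies `ba` nilpotent, in any ring. -/
lemma aux_isNilpotent_swap {R : Type*} [Ring R] {a b : R} (h : IsNilpotent (a * b)) :
    IsNilpotent (b * a) := by
  obtain ⟨n, hn⟩ := h
  have key : ∀ m : ℕ, (b * a) ^ (m + 1) = b * (a * b) ^ m * a := by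
    intro m
    induction m with
    | zero => simp
    | succ m ih =>
      rw [pow_succ, ih, pow_succ]
      simp only [mul_assoc]
  exact ⟨n + 1, by rw [key n, hn, mul_zero, zero_mul]⟩

/-- A square nilpotent implies nilpotent. -/
lemma aux_isNilpotent_of_sq {R : Type*} [Ring R] {a : R} (h : IsNilpotent (a * a)) :
    IsNilpotent a := by
  obtain ⟨n, hn⟩ := h
  exact ⟨2 * n, by rw [pow_mul, sq, hn]⟩

/-- Products of graded components. -/
lemma aux_proj_mul {K R : Type*} [CommSemiring K] [Semiring R] [Algebra K R]
    (𝒜 : ℕ → Submodule K R) [GradedAlgebra 𝒜] (a b : R) (d : ℕ) :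
    (DirectSum.decompose 𝒜 (a * b) d : R) =
      ∑ i ∈ Finset.range (d + 1),
        (DirectSum.decompose 𝒜 a i : R) * (DirectSum.decompose 𝒜 b (d - i) : R) := by
  classical
  rw [DirectSum.decompose_mul, DirectSum.coe_mul_apply]
  rw [Finset.sum_subset
    (show (((DirectSum.decompose 𝒜 a).support ×ˢ (DirectSum.decompose 𝒜 b).support).filter
        (fun ij : ℕ × ℕ => ij.1 + ij.2 = d)) ⊆ Finset.HasAntidiagonal.antidiagonal d by
      intro ij hij
      rw [Finset.HasAntidiagonal.mem_antidiagonal]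
      exact (Finset.mem_filter.1 hij).2)
    (by
      intro ij hij hij'
      rw [Finset.HasAntidiagonal.mem_antidiagonal] at hij
      rw [Finset.mem_filter, not_and] at hij'
      have : ij ∉ (DirectSum.decompose 𝒜 a).support ×ˢ (DirectSum.decompose 𝒜 b).support := by
        intro hc; exact (hij' hc) hij
      rw [Finset.mem_product, not_and_or] at this
      rcases this with h | h
      · rw [DFinsupp.notMem_support_iff] at h
        rw [h]
        simp
      · rw [DFinsupp.notMem_support_iff] at h
        rw [h]
        simp)]
  rw [Finset.Nat.sum_antidiagonal_eq_sum_range_succ_mk]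

/-- Characterization of the Jacobson radical of the zero ideal in a
(possibly noncommutative) ring. -/
lemma aux_mem_jacobson_bot_iff {R : Type*} [Ring R] {x : R} :
    x ∈ (⊥ : Ideal R).jacobson ↔ ∀ y, IsUnit (y * x + 1) := by
  constructor
  · intro h y
    obtain ⟨z, hz⟩ := Ideal.mem_jacobson_iff.1 h y
    rw [Ideal.mem_bot, sub_eq_zero] at hz
    -- hz : z * y * x + z = 1
    have hz1 : z * (y * x + 1) = 1 := by rw [mul_add, mul_one, ← mul_assoc, hz]
    have hzJ : z - (1 : R) ∈ (⊥ : Ideal R).jacobson := by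
      have e : z - 1 = -(z * y * x) := by rw [← hz]; noncomm_ring
      rw [e]
      exact neg_mem (Ideal.mul_mem_left _ (z * y) h)
    obtain ⟨w, hw⟩ := Ideal.mem_jacobson_iff.1 hzJ 1
    rw [Ideal.mem_bot, sub_eq_zero] at hw
    -- hw : w * 1 * (z - 1) + w = 1
    have hw1 : w * z = 1 := by
      have : w * 1 * (z - 1) + w = w * z := by noncomm_ring
      rw [← this, hw]
    have hy : y * x + 1 = w := by
      calc y * x + 1 = w * z * (y * x + 1) := by rw [hw1, one_mul]
        _ = w * (z * (y * x + 1)) := by rw [mul_assoc]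
        _ = w := by rw [hz1, mul_one]
    exact ⟨⟨y * x + 1, z, by rw [hy, hw1], hz1⟩, rfl⟩
  · intro h
    rw [Ideal.mem_jacobson_iff]
    intro y
    obtain ⟨u, hu⟩ := h y
    refine ⟨((u⁻¹ : Rˣ) : R), ?_⟩
    rw [Ideal.mem_bot]
    have h1 : ((u⁻¹ : Rˣ) : R) * (y * x + 1) = 1 := by rw [← hu, Units.inv_mul]
    calc ((u⁻¹ : Rˣ) : R) * y * x + ((u⁻¹ : Rˣ) : R) - 1
        = ((u⁻¹ : Rˣ) : R) * (y * x + 1) - 1 := by noncomm_ring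
      _ = 0 := by rw [h1, sub_self]

/-- If `R` is a connected `ℕ`-graded algebra over a field `K` (i.e. `R₀ = K`)
which is NI, then `R` is NJ: `J(R) = N(R)`. -/
theorem connected_graded_NI_isNJ (K R : Type*) [Field K] [Ring R] [Algebra K R]
    (𝒜 : ℕ → Submodule K R) [GradedAlgebra 𝒜]
    (hconn : 𝒜 0 = (1 : Submodule K R)) (hNI : IsNIRing R) :
    (jacobsonRad R : Set R) = nilSet R := by
  classical
  -- membership characterization of nilpotency via the upper nilradical
  have hmem : ∀ a : R, IsNilpotent a ↔ a ∈ upperNilradical R := by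
    intro a
    constructor
    · intro h
      have h' : a ∈ nilSet R := h
      rw [← hNI] at h'
      exact h'
    · intro h
      have h' : a ∈ (upperNilradical R : Set R) := h
      rw [hNI] at h'
      exact h'
  have nil_add : ∀ {a b : R}, IsNilpotent a → IsNilpotent b → IsNilpotent (a + b) := by
    intro a b ha hb
    exact (hmem _).2 (TwoSidedIdeal.add_mem _ ((hmem _).1 ha) ((hmem _).1 hb))
  have nil_mul_left : ∀ (a : R) {b : R}, IsNilpotent b → IsNilpotent (a * b) := by
    intro a b hb
    exact (hmem _).2 (TwoSidedIdeal.mul_mem_left _ a b ((hmem _).1 hb))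
  have nil_mul_right : ∀ {a : R} (b : R), IsNilpotent a → IsNilpotent (a * b) := by
    intro a b ha
    exact (hmem _).2 (TwoSidedIdeal.mul_mem_right _ a b ((hmem _).1 ha))
  have nil_sub : ∀ {a b : R}, IsNilpotent a → IsNilpotent b → IsNilpotent (a - b) := by
    intro a b ha hb
    have e : a - b = a + (-1) * b := by rw [neg_one_mul, ← sub_eq_add_neg]
    rw [e]
    exact nil_add ha (nil_mul_left _ hb)
  apply Set.Subset.antisymm
  · -- J(R) ⊆ N(R)
    intro x hx
    have hx' : x ∈ (⊥ : Ideal R).jacobson := hx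
    have hxJ : ∀ y : R, IsUnit (y * x + 1) := aux_mem_jacobson_bot_iff.1 hx' 
    -- the degree-0 component of x
    have hd0 : (DirectSum.decompose 𝒜 x 0 : R) ∈ (1 : Submodule K R) := by
      rw [← hconn]; exact SetLike.coe_mem _
    obtain ⟨c, hc⟩ := Submodule.mem_one.1 hd0
    by_cases hc0 : c = 0
    · -- main case: the degree-0 component of x is 0
      have h0 : (DirectSum.decompose 𝒜 x 0 : R) = 0 := by rw [← hc, hc0, map_zero]
      -- build the inverse u of 1 - x
      have hxunit : IsUnit (1 - x) := by
        have := hxJ (-1)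
        have e : (-1 : R) * x + 1 = 1 - x := by noncomm_ring
        rwa [e] at this
      obtain ⟨v, hv⟩ := hxunit
      set u : R := ((v⁻¹ : Rˣ) : R) with hu_def
      have hu1 : (1 - x) * u = 1 := by rw [← hv, hu_def]; exact v.mul_inv
      have hu2 : u * (1 - x) = 1 := by rw [← hv, hu_def]; exact v.inv_mul
      have huu : u = 1 + x * u := by
        have h : u - x * u = 1 := by rw [← hu1, sub_mul, one_mul]
        rw [sub_eq_iff_eq_add] at h
        exact h
      -- degree components of 1
      have hone : ∀ d : ℕ, d ≠ 0 → (DirectSum.decompose 𝒜 (1 : R) d : R) = 0 := by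
        intro d hd
        exact DirectSum.decompose_of_mem_ne 𝒜 SetLike.GradedOne.one_mem (Ne.symm hd)
      have hone0 : (DirectSum.decompose 𝒜 (1 : R) 0 : R) = 1 :=
        DirectSum.decompose_of_mem_same 𝒜 SetLike.GradedOne.one_mem
      -- degree-0 component of u is 1
      have h2 : (DirectSum.decompose 𝒜 ((1 : R) - x) 0 : R) = 1 := by
        rw [DirectSum.decompose_sub, DirectSum.sub_apply, AddSubgroupClass.coe_sub,
          hone0, h0, sub_zero]
      have hu0 : (DirectSum.decompose 𝒜 u 0 : R) = 1 := by
        have h1 : (DirectSum.decompose 𝒜 (u * (1 - x)) 0 : R) = 1 := by rw [hu2, hone0]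
        rw [aux_proj_mul 𝒜 u (1 - x) 0] at h1
        simp only [zero_add, Finset.range_one, Finset.sum_singleton, Nat.sub_zero] at h1
        rw [h2, mul_one] at h1
        exact h1
      -- bounds on supports
      obtain ⟨B, hB⟩ : ∃ B : ℕ, ∀ n, B < n → (DirectSum.decompose 𝒜 u n : R) = 0 := by
        refine ⟨(DirectSum.decompose 𝒜 u).support.sup id, fun n hn => ?_⟩
        have h : n ∉ (DirectSum.decompose 𝒜 u).support := by
          intro hmem'
          exact absurd (Finset.le_sup (f := id) hmem') (not_le.2 hn)
        rw [DFinsupp.notMem_support_iff] at h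
        rw [h, ZeroMemClass.coe_zero]
      obtain ⟨Bx, hBx⟩ : ∃ Bx : ℕ, ∀ n, Bx < n → (DirectSum.decompose 𝒜 x n : R) = 0 := by
        refine ⟨(DirectSum.decompose 𝒜 x).support.sup id, fun n hn => ?_⟩
        have h : n ∉ (DirectSum.decompose 𝒜 x).support := by
          intro hmem'
          exact absurd (Finset.le_sup (f := id) hmem') (not_le.2 hn)
        rw [DFinsupp.notMem_support_iff] at h
        rw [h, ZeroMemClass.coe_zero]
      -- the component recurrence for u
      have hrel : ∀ d : ℕ, 1 ≤ d →
          (DirectSum.decompose 𝒜 u d : R) = ∑ i ∈ Finset.range (d + 1),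
            (DirectSum.decompose 𝒜 x i : R) * (DirectSum.decompose 𝒜 u (d - i) : R) := by
        intro d hd
        have h1 : (DirectSum.decompose 𝒜 u d : R) =
            (DirectSum.decompose 𝒜 ((1 : R) + x * u) d : R) := by rw [← huu]
        have hh2 : (DirectSum.decompose 𝒜 ((1 : R) + x * u) d : R) =
            (DirectSum.decompose 𝒜 (1 : R) d : R) +
              (DirectSum.decompose 𝒜 (x * u) d : R) := by
          rw [DirectSum.decompose_add, DirectSum.add_apply, AddMemClass.coe_add]
        rw [h1, hh2, hone d (by omega), zero_add, aux_proj_mul 𝒜 x u d]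
      -- main claim: every positive-degree component of x is nilpotent
      have outer : ∀ j n : ℕ, Bx < n + j → 1 ≤ n →
          IsNilpotent (DirectSum.decompose 𝒜 x n : R) := by
        intro j
        induction j with
        | zero =>
          intro n hn _
          rw [hBx n (by omega)]
          exact IsNilpotent.zero
        | succ j ihj =>
          intro n hn hn1
          have H : ∀ m, n < m → IsNilpotent (DirectSum.decompose 𝒜 x m : R) := by
            intro m hm
            exact ihj m (by omega) (by omega)
          -- inner induction: x_n * u_j' is nilpotent for all j'
          have inner : ∀ k j' : ℕ, B < j' + k →
              IsNilpotent ((DirectSum.decompose 𝒜 x n : R) *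
                (DirectSum.decompose 𝒜 u j' : R)) := by
            intro k
            induction k with
            | zero =>
              intro j' hj'
              rw [hB j' (by omega), mul_zero]
              exact IsNilpotent.zero
            | succ k ihk =>
              intro j' hj'
              have IH' : ∀ j'', j' < j'' → IsNilpotent ((DirectSum.decompose 𝒜 x n : R) *
                  (DirectSum.decompose 𝒜 u j'' : R)) :=
                fun j'' hj'' => ihk j'' (by omega)
              have hd1 : 1 ≤ j' + n := by omega
              have hrel2 : (DirectSum.decompose 𝒜 u (j' + n) : R) *
                  (DirectSum.decompose 𝒜 x n : R) =
                  ∑ i ∈ Finset.range (j' + n + 1), (DirectSum.decompose 𝒜 x i : R) *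
                    (DirectSum.decompose 𝒜 u (j' + n - i) : R) *
                    (DirectSum.decompose 𝒜 x n : R) := by
                rw [hrel (j' + n) hd1, Finset.sum_mul]
              have hn_mem : n ∈ Finset.range (j' + n + 1) := by
                rw [Finset.mem_range]; omega
              have hsplit : (DirectSum.decompose 𝒜 u (j' + n) : R) *
                  (DirectSum.decompose 𝒜 x n : R) =
                  (DirectSum.decompose 𝒜 x n : R) * (DirectSum.decompose 𝒜 u j' : R) *
                    (DirectSum.decompose 𝒜 x n : R) +
                  ∑ i ∈ (Finset.range (j' + n + 1)).erase n,
                    (DirectSum.decompose 𝒜 x i : R) *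
                    (DirectSum.decompose 𝒜 u (j' + n - i) : R) *
                    (DirectSum.decompose 𝒜 x n : R) := by
                rw [hrel2, ← Finset.add_sum_erase _
                  (fun i => (DirectSum.decompose 𝒜 x i : R) *
                    (DirectSum.decompose 𝒜 u (j' + n - i) : R) *
                    (DirectSum.decompose 𝒜 x n : R)) hn_mem]
                have he : j' + n - n = j' := by omega
                rw [he]
              -- every other term is nilpotent
              have hterm : ∀ i ∈ (Finset.range (j' + n + 1)).erase n,
                  IsNilpotent ((DirectSum.decompose 𝒜 x i : R) *
                    (DirectSum.decompose 𝒜 u (j' + n - i) : R) *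
                    (DirectSum.decompose 𝒜 x n : R)) := by
                intro i hi
                have hi1 := Finset.mem_erase.1 hi
                have hi2 := Finset.mem_range.1 hi1.2
                rcases lt_or_gt_of_ne hi1.1 with hlt | hgt
                · -- i < n : use inner IH, since j' + n - i > j'
                  have hdi : j' < j' + n - i := by omega
                  have h1 : IsNilpotent ((DirectSum.decompose 𝒜 x n : R) *
                      (DirectSum.decompose 𝒜 u (j' + n - i) : R)) := IH' _ hdi
                  have hsw : IsNilpotent ((DirectSum.decompose 𝒜 u (j' + n - i) : R) *
                      (DirectSum.decompose 𝒜 x n : R)) := aux_isNilpotent_swap h1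
                  rw [mul_assoc]
                  exact nil_mul_left _ hsw
                · -- i > n : xᵢ is nilpotent by the outer induction hypothesis
                  exact nil_mul_right _ (nil_mul_right _ (H i hgt))
              have hsum : IsNilpotent
                  (∑ i ∈ (Finset.range (j' + n + 1)).erase n,
                    (DirectSum.decompose 𝒜 x i : R) *
                    (DirectSum.decompose 𝒜 u (j' + n - i) : R) *
                    (DirectSum.decompose 𝒜 x n : R)) :=
                Finset.sum_induction _ IsNilpotent (fun _ _ => nil_add)
                  IsNilpotent.zero hterm
              have hlead : IsNilpotent ((DirectSum.decompose 𝒜 u (j' + n) : R) *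
                  (DirectSum.decompose 𝒜 x n : R)) := by
                have h1 : IsNilpotent ((DirectSum.decompose 𝒜 x n : R) *
                    (DirectSum.decompose 𝒜 u (j' + n) : R)) := IH' (j' + n) (by omega)
                exact aux_isNilpotent_swap h1
              have hkey : IsNilpotent ((DirectSum.decompose 𝒜 x n : R) *
                  (DirectSum.decompose 𝒜 u j' : R) * (DirectSum.decompose 𝒜 x n : R)) := by
                have e : (DirectSum.decompose 𝒜 x n : R) *
                    (DirectSum.decompose 𝒜 u j' : R) * (DirectSum.decompose 𝒜 x n : R) =
                    (DirectSum.decompose 𝒜 u (j' + n) : R) *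
                      (DirectSum.decompose 𝒜 x n : R) -
                    ∑ i ∈ (Finset.range (j' + n + 1)).erase n,
                      (DirectSum.decompose 𝒜 x i : R) *
                      (DirectSum.decompose 𝒜 u (j' + n - i) : R) *
                      (DirectSum.decompose 𝒜 x n : R) := by
                  rw [hsplit]; noncomm_ring
                rw [e]
                exact nil_sub hlead hsum
              have hsq : IsNilpotent
                  (((DirectSum.decompose 𝒜 x n : R) * (DirectSum.decompose 𝒜 u j' : R)) *
                   ((DirectSum.decompose 𝒜 x n : R) * (DirectSum.decompose 𝒜 u j' : R))) := by
                have e : ((DirectSum.decompose 𝒜 x n : R) * (DirectSum.decompose 𝒜 u j' : R)) *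
                    ((DirectSum.decompose 𝒜 x n : R) * (DirectSum.decompose 𝒜 u j' : R)) =
                    ((DirectSum.decompose 𝒜 x n : R) * (DirectSum.decompose 𝒜 u j' : R) *
                      (DirectSum.decompose 𝒜 x n : R)) * (DirectSum.decompose 𝒜 u j' : R) := by
                  simp only [mul_assoc]
                rw [e]
                exact nil_mul_right _ hkey
              exact aux_isNilpotent_of_sq hsq
          have hfin := inner (B + 1) 0 (by omega)
          rwa [hu0, mul_one] at hfin
      -- assemble: x is the sum of its components, each nilpotent
      have hx_sum : x = ∑ i ∈ (DirectSum.decompose 𝒜 x).support,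
          (DirectSum.decompose 𝒜 x i : R) :=
        (DirectSum.sum_support_decompose 𝒜 x).symm
      show IsNilpotent x
      rw [hx_sum]
      apply Finset.sum_induction _ IsNilpotent (fun _ _ => nil_add) IsNilpotent.zero
      intro i _
      rcases Nat.eq_zero_or_pos i with rfl | hi
      · rw [h0]; exact IsNilpotent.zero
      · exact outer (Bx + 1) i (by omega) hi
    · -- degree-0 component nonzero forces R to be trivial, so x = 0
      have hu := hxJ (algebraMap K R (-c⁻¹))
      have hu0 := hu.map (GradedRing.projZeroRingHom 𝒜)
      have e : (GradedRing.projZeroRingHom 𝒜) (algebraMap K R (-c⁻¹) * x + 1) = 0 := by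
        rw [map_add, map_mul, map_one]
        have e1 : (GradedRing.projZeroRingHom 𝒜) x = algebraMap K R c := by
          simp only [GradedRing.projZeroRingHom_apply]
          exact hc.symm
        have e2 : (GradedRing.projZeroRingHom 𝒜) (algebraMap K R (-c⁻¹)) =
            algebraMap K R (-c⁻¹) := by
          simp only [GradedRing.projZeroRingHom_apply]
          apply DirectSum.decompose_of_mem_same
          rw [hconn]
          exact Submodule.mem_one.2 ⟨-c⁻¹, rfl⟩
        rw [e1, e2, ← map_mul]
        have : -c⁻¹ * c = -1 := by field_simp
        rw [this, map_neg, map_one]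
        simp
      rw [e, isUnit_zero_iff] at hu0
      have hsub : Subsingleton R := subsingleton_of_zero_eq_one hu0
      show IsNilpotent x
      rw [Subsingleton.elim x 0]
      exact IsNilpotent.zero
  · -- N(R) ⊆ J(R)
    intro x hx
    have hx' : IsNilpotent x := hx
    have hgoal : x ∈ (⊥ : Ideal R).jacobson := by
      rw [aux_mem_jacobson_bot_iff]
      intro y
      exact (nil_mul_left y hx').isUnit_add_one
    exact hgoal
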